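/- Let t ≥ 2, k ≥ 2 and m ≥ 2 be integers. Then forb(m, t·F_{0,k,k,0}, t−1) ≤ forb(m−1, t·F_{0,k,k,0}, t−1) + (t−1)·forb(m−1, {F_{0,k,k,0}, t·F_{0,k,k−1,0}}). -/

import Mathlib

/-- `F` is a configuration in `A`: some row and column permutation of `F`
is a submatrix of `A`. -/
def IsConfig {k n m p : ℕ} (F : Matrix (Fin k) (Fin n) Bool)
    (A : Matrix (Fin m) (Fin p) Bool) : Prop :=
  ∃ (r : Fin k → Fin m) (c : Fin n → Fin p),
    Function.Injective r ∧ Function.Injective c ∧ ∀ i j, A (r i) (c j) = F i j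

/-- A (0,1)-matrix is simple if no two of its columns are equal. -/
def Simple {m p : ℕ} (A : Matrix (Fin m) (Fin p) Bool) : Prop :=
  Function.Injective fun j i => A i j

/-- A (0,1)-matrix is `t`-simple if every column occurs with multiplicity at most `t`. -/
def TSimple {m p : ℕ} (t : ℕ) (A : Matrix (Fin m) (Fin p) Bool) : Prop :=
  ∀ j : Fin p, (Finset.univ.filter fun j' : Fin p => ∀ i, A i j' = A i j).card ≤ t

/-- `forb m F`: the maximum number of columns of an `m`-rowed simple matrix
avoiding `F` as a configuration. -/
noncomputable def forb (m : ℕ) {k n : ℕ} (F : Matrix (Fin k) (Fin n) Bool) : ℕ :=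
  sSup { p : ℕ | ∃ A : Matrix (Fin m) (Fin p) Bool, Simple A ∧ ¬ IsConfig F A }

/-- `t·M`: the concatenation of `t` copies of `M`. -/
def tCopies {k n : ℕ} (t : ℕ) (M : Matrix (Fin k) (Fin n) Bool) :
    Matrix (Fin k) (Fin (t * n)) Bool :=
  fun i j => M i ⟨j.val % n, Nat.mod_lt _ (by
    rcases Nat.eq_zero_or_pos n with h | h
    · exact absurd j.isLt (by simp [h])
    · exact h)⟩

/-- `F_{a,b,c,d}`: the `(a+b+c+d) × 2` matrix with `a` rows `[1 1]`, `b` rows `[1 0]`,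
`c` rows `[0 1]` and `d` rows `[0 0]`. -/
def Fabcd (a b c d : ℕ) : Matrix (Fin (a+b+c+d)) (Fin 2) Bool :=
  fun i j =>
    if i.val < a then true
    else if i.val < a + b then decide (j = 0)
    else if i.val < a + b + c then decide (j = 1)
    else false

/-- `forb(m, F, t)` for a single forbidden configuration `F`:
maximum number of columns of an `m`-rowed `t`-simple matrix avoiding `F`. -/
noncomputable def forbT (m t : ℕ) {k n : ℕ} (F : Matrix (Fin k) (Fin n) Bool) : ℕ :=
  sSup { p : ℕ | ∃ A : Matrix (Fin m) (Fin p) Bool, TSimple t A ∧ ¬ IsConfig F A }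

/-- `forb(m, {F1, F2})` for a pair of forbidden configurations (simple matrices). -/
noncomputable def forbPair (m : ℕ) {k1 n1 k2 n2 : ℕ}
    (F1 : Matrix (Fin k1) (Fin n1) Bool) (F2 : Matrix (Fin k2) (Fin n2) Bool) : ℕ :=
  sSup { p : ℕ | ∃ A : Matrix (Fin m) (Fin p) Bool,
    TSimple 1 A ∧ ¬ IsConfig F1 A ∧ ¬ IsConfig F2 A }

lemma isConfig_comp {k n m p m' p' : ℕ} {F : Matrix (Fin k) (Fin n) Bool}
    {A : Matrix (Fin m) (Fin p) Bool} {A' : Matrix (Fin m') (Fin p') Bool}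
    (e : Fin m' → Fin m) (g : Fin p' → Fin p) (he : Function.Injective e)
    (hg : Function.Injective g) (hAA : ∀ i j, A' i j = A (e i) (g j))
    (h : IsConfig F A') : IsConfig F A := by
  obtain ⟨r, c, hr, hc, h⟩ := h
  exact ⟨e ∘ r, g ∘ c, he.comp hr, hg.comp hc,
    fun i j => by simpa [Function.comp, ← hAA] using h i j⟩

lemma tsimple_card_bound {m p t : ℕ} (A : Matrix (Fin m) (Fin p) Bool) (hA : TSimple t A) :
    p ≤ t * 2 ^ m := by
  classical
  have h1 : (Finset.univ : Finset (Fin p)).card ≤ t *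
      ((Finset.univ : Finset (Fin p)).image fun j (i : Fin m) => A i j).card := by
    apply Finset.card_le_mul_card_image
    intro a ha
    simp only [Finset.mem_image, Finset.mem_univ, true_and] at ha
    obtain ⟨j, rfl⟩ := ha
    simpa [funext_iff] using hA j
  have h2 : ((Finset.univ : Finset (Fin p)).image fun j (i : Fin m) => A i j).card ≤ 2 ^ m := by
    have := Finset.card_le_univ ((Finset.univ : Finset (Fin p)).image fun j (i : Fin m) => A i j)
    simpa using this
  calc p = (Finset.univ : Finset (Fin p)).card := by simp
    _ ≤ t * _ := h1
    _ ≤ t * 2 ^ m := Nat.mul_le_mul_left t h2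


set_option maxHeartbeats 2000000 in
/-- **The induction (5).** For `t, k, m ≥ 2`:
`forb(m, t·F_{0,k,k,0}, t−1) ≤ forb(m−1, t·F_{0,k,k,0}, t−1)
  + (t−1)·forb(m−1, {F_{0,k,k,0}, t·F_{0,k,k−1,0}})`. -/
theorem stmt_3 (t k m : ℕ) (ht : 2 ≤ t) (hk : 2 ≤ k) (hm : 2 ≤ m) :
    forbT m (t - 1) (tCopies t (Fabcd 0 k k 0)) ≤
      forbT (m - 1) (t - 1) (tCopies t (Fabcd 0 k k 0)) +
      (t - 1) * forbPair (m - 1) (Fabcd 0 k k 0) (tCopies t (Fabcd 0 k (k - 1) 0)) := by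
  classical
  have hbdd1 : BddAbove { p : ℕ | ∃ A : Matrix (Fin (m-1)) (Fin p) Bool,
      TSimple (t-1) A ∧ ¬ IsConfig (tCopies t (Fabcd 0 k k 0)) A } := by
    refine ⟨(t-1) * 2^(m-1), fun p hp => ?_⟩
    obtain ⟨A, hA, -⟩ := hp
    exact tsimple_card_bound A hA
  have hbdd2 : BddAbove { p : ℕ | ∃ A : Matrix (Fin (m-1)) (Fin p) Bool,
      TSimple 1 A ∧ ¬ IsConfig (Fabcd 0 k k 0) A ∧
        ¬ IsConfig (tCopies t (Fabcd 0 k (k-1) 0)) A } := by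
    refine ⟨1 * 2^(m-1), fun p hp => ?_⟩
    obtain ⟨A, hA, -⟩ := hp
    exact tsimple_card_bound A hA
  rw [forbT]
  apply csSup_le
  · refine ⟨0, ⟨fun _ j => j.elim0, fun j => j.elim0, ?_⟩⟩
    rintro ⟨r, c, -, -, -⟩
    exact (c ⟨0, by omega⟩).elim0
  intro p hp
  obtain ⟨A, hA, hAv⟩ := hp
  -- setup
  set z : Fin m := ⟨0, by omega⟩ with hz
  set e : Fin (m-1) → Fin m := fun i => ⟨i.val + 1, by omega⟩ with he'
  have he : Function.Injective e := by
    intro a b hab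
    simp only [he', Fin.mk.injEq, add_left_inj] at hab
    exact Fin.ext hab
  set res : Fin p → (Fin (m-1) → Bool) := fun j i => A (e i) j with hres
  set fib : (Fin (m-1) → Bool) → Finset (Fin p) :=
    fun v => Finset.univ.filter (fun j => res j = v) with hfib
  set V : Finset (Fin (m-1) → Bool) := Finset.univ.image res with hV
  -- each subfiber has at most t-1 elements
  have K2 : ∀ (v : Fin (m-1) → Bool) (b : Bool),
      (Finset.univ.filter fun x : Fin p => res x = v ∧ A z x = b).card ≤ t - 1 := by
    intro v b
    by_cases hne : (Finset.univ.filter fun x : Fin p => res x = v ∧ A z x = b).Nonempty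
    · obtain ⟨x₀, hx₀⟩ := hne
      simp only [Finset.mem_filter, Finset.mem_univ, true_and] at hx₀
      refine le_trans (Finset.card_le_card ?_) (hA x₀)
      intro x hx
      simp only [Finset.mem_filter, Finset.mem_univ, true_and] at hx ⊢
      intro i
      by_cases hi : i.val = 0
      · have hiz : i = z := by rw [hz]; exact Fin.ext hi
        rw [hiz, hx.2, hx₀.2]
      · have hi1 : i = e ⟨i.val - 1, by omega⟩ := by
          rw [he']; exact Fin.ext (by simp; omega)
        rw [hi1]
        have h1 := congrFun (hx.1.trans hx₀.1.symm) (⟨i.val - 1, by omega⟩ : Fin (m-1))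
        rw [hres] at h1
        exact h1
    · rw [Finset.not_nonempty_iff_eq_empty.mp hne]
      simp
  have Ksplit : ∀ v, (fib v).card =
      (Finset.univ.filter fun x : Fin p => res x = v ∧ A z x = false).card +
      (Finset.univ.filter fun x : Fin p => res x = v ∧ A z x = true).card := by
    intro v
    have h := Finset.card_filter_add_card_filter_not
      (s := fib v) (p := fun x => A z x = false)
    simp only [hfib, Finset.filter_filter] at h
    have h2 : (Finset.filter (fun a : Fin p => res a = v ∧ ¬A z a = false) Finset.univ) =
        (Finset.filter (fun x : Fin p => res x = v ∧ A z x = true) Finset.univ) := by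
      apply Finset.filter_congr
      intro x _
      simp [Bool.not_eq_false]
    rw [h2] at h
    simp only [hfib]
    omega
  -- fibers have at most 2(t-1) elements
  have K3 : ∀ v, (fib v).card ≤ 2 * (t - 1) := by
    intro v
    have := K2 v false
    have := K2 v true
    have := Ksplit v
    omega
  -- big fibers meet both sides of row z
  have K4 : ∀ v, t ≤ (fib v).card → ∀ b : Bool,
      (Finset.univ.filter fun x : Fin p => res x = v ∧ A z x = b).Nonempty := by
    intro v hv b
    rw [Finset.nonempty_iff_ne_empty]
    intro hemp
    have h0 : (Finset.univ.filter fun x : Fin p => res x = v ∧ A z x = b).card = 0 := by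
      rw [hemp]; simp
    have h1 := K2 v (!b)
    have h2 := Ksplit v
    cases b
    · simp only [Bool.not_false] at h1
      omega
    · simp only [Bool.not_true] at h1
      omega
  -- choose a (t-1)-truncation of each fiber
  have hS : ∀ v, ∃ S : Finset (Fin p), S ⊆ fib v ∧ S.card = min (fib v).card (t-1) :=
    fun v => Finset.exists_subset_card_eq (min_le_left _ _)
  choose S hSsub hScard using hS
  set chosen : Finset (Fin p) := V.biUnion S with hchosen
  have hfib_disj : ∀ v ∈ V, ∀ w ∈ V, v ≠ w → Disjoint (S v) (S w) := by
    intro v _ w _ hvw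
    refine Finset.disjoint_left.mpr fun x hxv hxw => hvw ?_
    have h1 := hSsub v hxv
    have h2 := hSsub w hxw
    simp only [hfib, Finset.mem_filter] at h1 h2
    rw [← h1.2, ← h2.2]
  have hqcard : chosen.card = ∑ v ∈ V, min (fib v).card (t-1) := by
    rw [hchosen, Finset.card_biUnion hfib_disj]
    exact Finset.sum_congr rfl fun v _ => hScard v
  have K5 : ∀ v ∈ V, chosen.filter (fun x => res x = v) = S v := by
    intro v hv
    ext x
    simp only [hchosen, Finset.mem_filter, Finset.mem_biUnion]
    constructor
    · rintro ⟨⟨w, hwV, hxw⟩, hresx⟩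
      have hw : res x = w := by
        have hmem := hSsub w hxw
        simp only [hfib, Finset.mem_filter] at hmem
        exact hmem.2
      rw [show v = w from hresx.symm.trans hw]
      exact hxw
    · intro hx
      have hmem := hSsub v hx
      simp only [hfib, Finset.mem_filter] at hmem
      exact ⟨⟨v, hv, hx⟩, hmem.2⟩
  -- the matrix on the chosen columns
  set Aq : Matrix (Fin (m-1)) (Fin chosen.card) Bool :=
    fun i j => A (e i) ((chosen.equivFin.symm j) : Fin p) with hAq
  have hq_le : chosen.card ≤ forbT (m-1) (t-1) (tCopies t (Fabcd 0 k k 0)) := by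
    apply le_csSup hbdd1
    refine ⟨Aq, ?_, ?_⟩
    · intro j
      have hmem : ((chosen.equivFin.symm j) : Fin p) ∈ chosen := (chosen.equivFin.symm j).2
      have hcardeq : (Finset.univ.filter fun j' : Fin chosen.card =>
          ∀ i, Aq i j' = Aq i j).card =
          (chosen.filter fun x => res x = res ((chosen.equivFin.symm j) : Fin p)).card := by
        apply Finset.card_nbij (fun x => ((chosen.equivFin.symm x) : Fin p))
        · intro x hx
          simp only [Finset.mem_coe, Finset.mem_filter, Finset.mem_univ, true_and] at hx
          simp only [Finset.mem_coe, Finset.mem_filter]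
          exact ⟨(chosen.equivFin.symm x).2, funext fun i => hx i⟩
        · exact (Subtype.val_injective.comp chosen.equivFin.symm.injective).injOn
        · intro y hy
          simp only [Finset.mem_coe, Finset.mem_filter] at hy
          refine ⟨chosen.equivFin ⟨y, hy.1⟩, ?_, ?_⟩
          · simp only [Finset.mem_coe, Finset.mem_filter, Finset.mem_univ, true_and]
            intro i
            show A (e i) ((chosen.equivFin.symm (chosen.equivFin ⟨y, hy.1⟩)) : Fin p) = _
            rw [Equiv.symm_apply_apply]
            exact congrFun hy.2 i
          · simp
      rw [hcardeq, K5 _ (by simp [hV]), hScard]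
      exact min_le_right _ _
    · intro h
      apply hAv
      refine isConfig_comp e (fun x => ((chosen.equivFin.symm x) : Fin p)) he
        (Subtype.val_injective.comp chosen.equivFin.symm.injective) (fun i j => rfl) h
  -- the matrix of big-fiber column values
  set D : Finset (Fin (m-1) → Bool) := V.filter (fun v => t ≤ (fib v).card) with hD
  set MD : Matrix (Fin (m-1)) (Fin D.card) Bool :=
    fun i j => (D.equivFin.symm j : Fin (m-1) → Bool) i with hMD
  have hd_le : D.card ≤ forbPair (m-1) (Fabcd 0 k k 0) (tCopies t (Fabcd 0 k (k-1) 0)) := by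
    apply le_csSup hbdd2
    refine ⟨MD, ?_, ?_, ?_⟩
    · intro j
      have hsingle : (Finset.univ.filter fun j' : Fin D.card =>
          ∀ i, MD i j' = MD i j) = {j} := by
        ext j'
        simp only [Finset.mem_filter, Finset.mem_univ, true_and, Finset.mem_singleton]
        constructor
        · intro h
          exact D.equivFin.symm.injective (Subtype.ext (funext h))
        · rintro rfl
          exact fun i => rfl
      rw [hsingle]
      simp
    · rintro ⟨r, c, hr, hc, hrc⟩
      apply hAv
      set v : Fin 2 → (Fin (m-1) → Bool) :=
        fun jj => ((D.equivFin.symm (c jj)) : Fin (m-1) → Bool) with hv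
      have hvinj : Function.Injective v := by
        intro a b hab
        exact hc (D.equivFin.symm.injective (Subtype.ext hab))
      have hvD : ∀ jj, v jj ∈ D := fun jj => (D.equivFin.symm (c jj)).2
      have hvcard : ∀ jj, t ≤ (fib (v jj)).card := by
        intro jj
        have h1 := hvD jj
        rw [hD, Finset.mem_filter] at h1
        exact h1.2
      have hT : ∀ jj : Fin 2, ∃ T : Finset (Fin p), T ⊆ fib (v jj) ∧ T.card = t :=
        fun jj => Finset.exists_subset_card_eq (hvcard jj)
      choose T hTsub hTcard using hT
      set f : Fin 2 → Fin t → Fin p :=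
        fun jj i => ((T jj).equivFin.symm (finCongr (hTcard jj).symm i) : Fin p) with hf
      have hfres : ∀ jj i, res (f jj i) = v jj := by
        intro jj i
        have hmem := hTsub jj ((T jj).equivFin.symm (finCongr (hTcard jj).symm i)).2
        simp only [hfib, Finset.mem_filter] at hmem
        exact hmem.2
      have hfinj : ∀ jj, Function.Injective (f jj) := by
        intro jj a b hab
        have h1 := (T jj).equivFin.symm.injective (Subtype.ext hab)
        have h2 : (a : ℕ) = (b : ℕ) := by simpa using congrArg Fin.val h1
        exact Fin.ext h2
      set md2 : Fin (t*2) → Fin 2 := fun j => ⟨j.val % 2, by omega⟩ with hmd2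
      set dv2 : Fin (t*2) → Fin t :=
        fun j => ⟨j.val / 2, by have := j.isLt; omega⟩ with hdv2
      refine ⟨e ∘ r, fun j => f (md2 j) (dv2 j), he.comp hr, ?_, ?_⟩
      · intro a b hab
        have hres_eq : v (md2 a) = v (md2 b) :=
          ((hfres (md2 a) (dv2 a)).symm.trans (congrArg res hab)).trans
            (hfres (md2 b) (dv2 b))
        have h2 := hvinj hres_eq
        have hab' : f (md2 a) (dv2 a) = f (md2 b) (dv2 b) := hab
        rw [h2] at hab'
        have h4 := hfinj _ hab'
        have h2' : a.val % 2 = b.val % 2 := by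
          have := congrArg Fin.val h2
          simpa [hmd2] using this
        have h4' : a.val / 2 = b.val / 2 := by
          have := congrArg Fin.val h4
          simpa [hdv2] using this
        exact Fin.ext (by omega)
      · intro i j
        calc A ((e ∘ r) i) (f (md2 j) (dv2 j))
            = res (f (md2 j) (dv2 j)) (r i) := rfl
          _ = v (md2 j) (r i) := congrFun (hfres (md2 j) (dv2 j)) (r i)
          _ = MD (r i) (c (md2 j)) := rfl
          _ = Fabcd 0 k k 0 i (md2 j) := hrc i (md2 j)
          _ = tCopies t (Fabcd 0 k k 0) i j := rfl
    · rintro ⟨r, c, hr, hc, hrc⟩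
      apply hAv
      set w : Fin (t*2) → (Fin (m-1) → Bool) :=
        fun j => ((D.equivFin.symm (c j)) : Fin (m-1) → Bool) with hw
      have hwinj : Function.Injective w := by
        intro a b hab
        exact hc (D.equivFin.symm.injective (Subtype.ext hab))
      have hwD : ∀ j, w j ∈ D := fun j => (D.equivFin.symm (c j)).2
      have hwcard : ∀ j, t ≤ (fib (w j)).card := by
        intro j
        have h1 := hwD j
        rw [hD, Finset.mem_filter] at h1
        exact h1.2
      have hne2 : ∀ j : Fin (t*2), ∃ x : Fin p,
          res x = w j ∧ A z x = decide ((j : ℕ) % 2 = 1) := by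
        intro j
        obtain ⟨x, hx⟩ := K4 (w j) (hwcard j) (decide ((j : ℕ) % 2 = 1))
        simp only [Finset.mem_filter, Finset.mem_univ, true_and] at hx
        exact ⟨x, hx⟩
      choose g hg1 hg2 using hne2
      have hginj : Function.Injective g := by
        intro a b hab
        exact hwinj (((hg1 a).symm.trans (congrArg res hab)).trans (hg1 b))
      refine ⟨fun i => if h : (i : ℕ) < k + (k-1) then e (r ⟨i.val, by omega⟩) else z,
        g, ?_, hginj, ?_⟩
      · intro a b hab
        have hab' : (if h : (a : ℕ) < k + (k-1) then e (r ⟨a.val, by omega⟩) else z) =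
            (if h : (b : ℕ) < k + (k-1) then e (r ⟨b.val, by omega⟩) else z) := hab
        by_cases ha : (a : ℕ) < k + (k-1) <;> by_cases hb : (b : ℕ) < k + (k-1)
        · rw [dif_pos ha, dif_pos hb] at hab'
          have h1 := hr (he hab')
          have h2 := congrArg Fin.val h1
          exact Fin.ext (by simpa using h2)
        · rw [dif_pos ha, dif_neg hb] at hab'
          exfalso
          have hval := congrArg Fin.val hab'
          simp only [he', hz] at hval
          omega
        · rw [dif_neg ha, dif_pos hb] at hab'
          exfalso
          have hval := congrArg Fin.val hab'
          simp only [he', hz] at hval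
          omega
        · have h1 := a.isLt
          have h2 := b.isLt
          exact Fin.ext (by omega)
      · intro i j
        by_cases h : (i : ℕ) < k + (k-1)
        · calc A (if h' : (i : ℕ) < k + (k-1) then e (r ⟨i.val, by omega⟩) else z) (g j)
              = A (e (r ⟨i.val, by omega⟩)) (g j) := by rw [dif_pos h]
            _ = res (g j) (r ⟨i.val, by omega⟩) := rfl
            _ = w j (r ⟨i.val, by omega⟩) := congrFun (hg1 j) _
            _ = MD (r ⟨i.val, by omega⟩) (c j) := rfl
            _ = tCopies t (Fabcd 0 k (k-1) 0) ⟨i.val, by omega⟩ j := hrc _ j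
            _ = tCopies t (Fabcd 0 k k 0) i j := by
                simp only [tCopies, Fabcd]
                split_ifs <;> first | rfl | (exfalso; omega)
        · calc A (if h' : (i : ℕ) < k + (k-1) then e (r ⟨i.val, by omega⟩) else z) (g j)
              = A z (g j) := by rw [dif_neg h]
            _ = decide ((j : ℕ) % 2 = 1) := hg2 j
            _ = tCopies t (Fabcd 0 k k 0) i j := by
                have hival : (i : ℕ) = k + k - 1 := by
                  have := i.isLt
                  omega
                simp only [tCopies, Fabcd]
                split_ifs <;> first | (exfalso; omega) | skip
                apply decide_eq_decide.mpr
                rw [Fin.ext_iff]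
                simp
  -- counting
  have hsum : p = ∑ v ∈ V, (fib v).card := by
    have := Finset.card_eq_sum_card_fiberwise
      (f := res) (s := (Finset.univ : Finset (Fin p))) (t := V) (by simp [hV])
    simpa using this
  have hcount : p ≤ chosen.card + (t-1) * D.card := by
    have hpt : ∀ v ∈ V, (fib v).card ≤
        min (fib v).card (t-1) + (if t ≤ (fib v).card then t-1 else 0) := by
      intro v _
      have := K3 v
      by_cases hvt : t ≤ (fib v).card
      · simp only [hvt, if_true]
        omega
      · simp only [hvt, if_false]
        omega
    calc p = ∑ v ∈ V, (fib v).card := hsum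
      _ ≤ ∑ v ∈ V, (min (fib v).card (t-1) + if t ≤ (fib v).card then t-1 else 0) :=
          Finset.sum_le_sum hpt
      _ = (∑ v ∈ V, min (fib v).card (t-1)) +
          ∑ v ∈ V, (if t ≤ (fib v).card then t-1 else 0) := Finset.sum_add_distrib
      _ = chosen.card + (t-1) * D.card := by
          rw [hqcard]
          congr 1
          rw [← Finset.sum_filter, ← hD, Finset.sum_const, smul_eq_mul, mul_comm]
  calc p ≤ chosen.card + (t-1) * D.card := hcount
    _ ≤ _ := add_le_add hq_le (Nat.mul_le_mul_left _ hd_le)
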